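/- arXiv:1302.7066 — 4 statements merged into one kernel-verified Lean document; each statement's English description precedes it below -/
import Mathlib

section
/- Let P(z) = a_0 + Σ_{ν=μ}^{n} a_ν z^ν, where 1 ≤ μ ≤ n, be a polynomial of degree n (so the coefficients of z, z², ..., z^{μ−1} all vanish) which does not vanish in |z| < k, where k ≥ 1, and let Q(z) = z^n · conj(P(1/conj(z))) be its reverse polynomial. Then for every z with |z| = 1, k^μ · |P'(z)| ≤ |Q'(z)|. -/
open Polynomial Complex Metric Filter Topology

-- Step 1: multiset root sum inequality
lemma lem1 (u : ℂ) : ∀ (S : Multiset ℂ), (∀ z ∈ S, ‖u‖ ≤ ‖z‖) →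
    2 * (u * ((S.map (fun z => X - C z)).prod.derivative.eval u) *
      (starRingEnd ℂ) ((S.map (fun z => X - C z)).prod.eval u)).re ≤
    (S.card : ℝ) * Complex.normSq ((S.map (fun z => X - C z)).prod.eval u) := by
  intro S
  induction S using Multiset.induction with
  | empty => simp
  | cons z T ih =>
    intro h
    have hz : ‖u‖ ≤ ‖z‖ := h z (Multiset.mem_cons_self _ _)
    have hT : ∀ w ∈ T, ‖u‖ ≤ ‖w‖ := fun w hw => h w (Multiset.mem_cons_of_mem hw)
    have ihT := ih hT
    set q : ℂ[X] := (T.map (fun z => X - C z)).prod with hq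
    have hprod : ((z ::ₘ T).map (fun z => X - C z)).prod = (X - C z) * q := by
      rw [Multiset.map_cons, Multiset.prod_cons]
    rw [hprod]
    have hder : ((X - C z) * q).derivative = q + (X - C z) * q.derivative := by
      rw [derivative_mul, derivative_sub, derivative_X, derivative_C, sub_zero, one_mul]
    rw [hder]
    simp only [eval_add, eval_mul, eval_sub, eval_X, eval_C, map_mul, Multiset.card_cons]
    set a := q.eval u
    set b := q.derivative.eval u
    set w := u - z
    -- goal: 2*(u*(a + w*b)*(conj w * conj a)).re ≤ (card+1) * normSq (w*a)
    have key1 : 2 * (u * (starRingEnd ℂ) w).re ≤ Complex.normSq w := by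
      have h2 : Complex.normSq u ≤ Complex.normSq z := by
        rw [← Complex.sq_norm, ← Complex.sq_norm]
        exact pow_le_pow_left₀ (norm_nonneg u) hz 2
      have : Complex.normSq w - 2 * (u * (starRingEnd ℂ) w).re =
          Complex.normSq z - Complex.normSq u := by
        simp only [w, Complex.normSq_apply, Complex.mul_re, Complex.sub_re, Complex.sub_im,
          Complex.conj_re, Complex.conj_im]
        ring
      linarith
    have expand : (u * (a + w * b) * ((starRingEnd ℂ) w * (starRingEnd ℂ) a)).re =
        Complex.normSq a * (u * (starRingEnd ℂ) w).re
          + Complex.normSq w * (u * b * (starRingEnd ℂ) a).re := by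
      have e1 : u * (a + w * b) * ((starRingEnd ℂ) w * (starRingEnd ℂ) a) =
          (Complex.normSq a : ℂ) * (u * (starRingEnd ℂ) w)
            + (Complex.normSq w : ℂ) * (u * b * (starRingEnd ℂ) a) := by
        rw [← Complex.mul_conj, ← Complex.mul_conj]
        ring
      rw [e1]
      simp [Complex.add_re, Complex.re_ofReal_mul]
    rw [expand]
    push_cast
    have hnsa : 0 ≤ Complex.normSq a := Complex.normSq_nonneg a
    have hnsw : 0 ≤ Complex.normSq w := Complex.normSq_nonneg w
    nlinarith [ihT, key1, mul_le_mul_of_nonneg_left ihT hnsw]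

-- Step 2: for P with all roots of modulus ≥ |u|
lemma lem2 (P : ℂ[X]) {n : ℕ} (hn : P.natDegree = n) (hP : P ≠ 0)
    (u : ℂ) (hroots : ∀ z ∈ P.roots, ‖u‖ ≤ ‖z‖) :
    2 * (u * (P.derivative.eval u) * (starRingEnd ℂ) (P.eval u)).re ≤
      (n : ℝ) * Complex.normSq (P.eval u) := by
  have hcard : P.roots.card = P.natDegree :=
    (splits_iff_card_roots.mp (IsAlgClosed.splits P))
  have hfac := Polynomial.C_leadingCoeff_mul_prod_multiset_X_sub_C hcard
  set q : ℂ[X] := (P.roots.map (fun z => X - C z)).prod with hqdef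
  have h1 := lem1 u P.roots hroots
  rw [hcard, hn] at h1
  have hPq : P = C P.leadingCoeff * q := hfac.symm
  have he : P.eval u = P.leadingCoeff * q.eval u := by conv_lhs => rw [hPq, eval_mul, eval_C]
  have hd : P.derivative.eval u = P.leadingCoeff * q.derivative.eval u := by
    conv_lhs => rw [hPq]
    rw [derivative_C_mul, eval_mul, eval_C]
  rw [he, hd, map_mul, Complex.normSq_mul]
  have expand : (u * (P.leadingCoeff * q.derivative.eval u) *
      ((starRingEnd ℂ) P.leadingCoeff * (starRingEnd ℂ) (q.eval u))).re =
      Complex.normSq P.leadingCoeff * (u * q.derivative.eval u * (starRingEnd ℂ) (q.eval u)).re := by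
    have e1 : u * (P.leadingCoeff * q.derivative.eval u) *
        ((starRingEnd ℂ) P.leadingCoeff * (starRingEnd ℂ) (q.eval u)) =
        (Complex.normSq P.leadingCoeff : ℂ) * (u * q.derivative.eval u * (starRingEnd ℂ) (q.eval u)) := by
      rw [← Complex.mul_conj]; ring
    rw [e1, Complex.re_ofReal_mul]
  rw [expand]
  have hns : 0 ≤ Complex.normSq P.leadingCoeff := Complex.normSq_nonneg _
  nlinarith [mul_le_mul_of_nonneg_left h1 hns]

-- Step 3: |u P'(u)| ≤ |n P(u) - u P'(u)|
lemma lem3 (P : ℂ[X]) {n : ℕ} (hn : P.natDegree = n) (hP : P ≠ 0)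
    (u : ℂ) (hroots : ∀ z ∈ P.roots, ‖u‖ ≤ ‖z‖) :
    ‖u * P.derivative.eval u‖ ≤
      ‖(n : ℂ) * P.eval u - u * P.derivative.eval u‖ := by
  have h2 := lem2 P hn hP u hroots
  set x := P.eval u
  set y := u * P.derivative.eval u
  have hre : ((n : ℂ) * x * (starRingEnd ℂ) y).re = ((y * (starRingEnd ℂ) x).re) * n := by
    have : ((n : ℂ) * x * (starRingEnd ℂ) y).re = (n : ℝ) * (x * (starRingEnd ℂ) y).re := by
      rw [mul_assoc, ← Complex.ofReal_natCast, Complex.re_ofReal_mul]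
    rw [this]
    have : (x * (starRingEnd ℂ) y).re = (y * (starRingEnd ℂ) x).re := by
      simp [Complex.mul_re, Complex.conj_re, Complex.conj_im]; ring
    rw [this]; ring
  have hsq : Complex.normSq y ≤ Complex.normSq ((n : ℂ) * x - y) := by
    rw [Complex.normSq_sub]
    have hnx : Complex.normSq ((n : ℂ) * x) = (n : ℝ)^2 * Complex.normSq x := by
      rw [Complex.normSq_mul, Complex.normSq_natCast]; ring
    rw [hnx, hre]
    nlinarith [Complex.normSq_nonneg x, mul_le_mul_of_nonneg_left h2 (Nat.cast_nonneg (α := ℝ) n)]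
  rw [Complex.norm_def, Complex.norm_def]
  exact Real.sqrt_le_sqrt hsq

-- Step 4: R := C n * P - X * P' does not vanish where P doesn't and roots are big
lemma lem4 (P : ℂ[X]) {n : ℕ} (hn : P.natDegree = n) (hn1 : 1 ≤ n)
    (u : ℂ) (hroots : ∀ z ∈ P.roots, ‖u‖ ≤ ‖z‖)
    (hPu : P.eval u ≠ 0) :
    ((n : ℂ) * P.eval u - u * P.derivative.eval u) ≠ 0 := by
  intro h0
  have heq : u * P.derivative.eval u = (n : ℂ) * P.eval u := (sub_eq_zero.mp h0).symm
  have h2 := lem2 P hn (fun h => hPu (by rw [h]; simp)) u hroots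
  rw [heq] at h2
  have e1 : ((n : ℂ) * P.eval u * (starRingEnd ℂ) (P.eval u)).re =
      (n : ℝ) * Complex.normSq (P.eval u) := by
    rw [mul_assoc, Complex.mul_conj, ← Complex.ofReal_natCast, ← Complex.ofReal_mul]
    rw [Complex.ofReal_re]
  rw [e1] at h2
  have hns : 0 < Complex.normSq (P.eval u) := Complex.normSq_pos.mpr hPu
  have hnpos : (0 : ℝ) < n := by exact_mod_cast hn1
  nlinarith

-- Step 6: |eval z (reflect m (map conj f))| = |eval z f| when |z| = 1
lemma lem6 (f : ℂ[X]) (m : ℕ) (hf : f.natDegree ≤ m) (z : ℂ) (hz : ‖z‖ = 1) :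
    ‖(Polynomial.reflect m (f.map (starRingEnd ℂ))).eval z‖ =
      ‖f.eval z‖ := by
  have hz0 : z ≠ 0 := by intro h; rw [h] at hz; simp at hz
  have hzinv : (starRingEnd ℂ) z = z⁻¹ := by
    have : z * (starRingEnd ℂ) z = 1 := by
      rw [Complex.mul_conj]
      rw [← Complex.sq_norm, hz]; norm_num
    field_simp at this ⊢
    linear_combination this
  have hdeg2 : (Polynomial.reflect m (f.map (starRingEnd ℂ))).natDegree ≤ m := by
    apply Polynomial.natDegree_le_iff_coeff_eq_zero.mpr
    intro i hi
    rw [Polynomial.coeff_reflect, Polynomial.revAt_eq_self_of_lt hi, Polynomial.coeff_map]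
    have : f.coeff i = 0 := Polynomial.coeff_eq_zero_of_natDegree_lt (lt_of_le_of_lt hf hi)
    rw [this, map_zero]
  have e1 : (Polynomial.reflect m (f.map (starRingEnd ℂ))).eval z =
      z ^ m * (starRingEnd ℂ) (f.eval z) := by
    rw [Polynomial.eval_eq_sum_range' (Nat.lt_succ_of_le hdeg2)]
    have e2 : f.eval z = ∑ i ∈ Finset.range (m + 1), f.coeff i * z ^ i := by
      rw [Polynomial.eval_eq_sum_range' (Nat.lt_succ_of_le hf)]
    rw [e2, map_sum, Finset.mul_sum]
    rw [← Finset.sum_range_reflect]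
    apply Finset.sum_congr rfl
    intro i hi
    simp only [Finset.mem_range] at hi
    have him : m + 1 - 1 - i = m - i := by omega
    have hile : i ≤ m := by omega
    rw [him, Polynomial.coeff_reflect, Polynomial.revAt_le (by omega : m - i ≤ m),
      Polynomial.coeff_map]
    have : m - (m - i) = i := by omega
    rw [this, map_mul, map_pow, hzinv]
    have : z ^ m * ((starRingEnd ℂ) (f.coeff i) * (z⁻¹) ^ i) =
        (starRingEnd ℂ) (f.coeff i) * (z ^ m * (z ^ i)⁻¹) := by
      rw [inv_pow]; ring
    rw [this, ← pow_sub₀ z hz0 hile]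
  rw [e1, norm_mul, norm_pow, hz, one_pow, one_mul, Complex.norm_conj]

-- Step 7: derivative of the reverse polynomial
lemma lem7 (P : ℂ[X]) {n : ℕ} (hn : P.natDegree = n) (hn1 : 1 ≤ n) :
    Polynomial.derivative (Polynomial.reflect n (P.map (starRingEnd ℂ))) =
      Polynomial.reflect (n - 1)
        ((C (n : ℂ) * P - X * Polynomial.derivative P).map (starRingEnd ℂ)) := by
  set R : ℂ[X] := C (n : ℂ) * P - X * Polynomial.derivative P with hRdef
  have hXP : ∀ m : ℕ, (X * Polynomial.derivative P).coeff m = (m : ℂ) * P.coeff m := by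
    intro m
    cases m with
    | zero => simp
    | succ s =>
      rw [Polynomial.coeff_X_mul, Polynomial.coeff_derivative]
      push_cast; ring
  have hR : ∀ m : ℕ, R.coeff m = ((n : ℂ) - (m : ℂ)) * P.coeff m := by
    intro m
    rw [hRdef, Polynomial.coeff_sub, Polynomial.coeff_C_mul, hXP]
    ring
  ext j
  rw [Polynomial.coeff_derivative, Polynomial.coeff_reflect, Polynomial.coeff_reflect,
    Polynomial.coeff_map, Polynomial.coeff_map]
  by_cases hj : j ≤ n - 1
  · have h1 : j + 1 ≤ n := by omega
    rw [Polynomial.revAt_le h1, Polynomial.revAt_le hj]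
    have hm : n - (j + 1) = n - 1 - j := by omega
    rw [hm, hR]
    have hcast : ((n : ℂ) - ((n - 1 - j : ℕ) : ℂ)) = ((j : ℂ) + 1) := by
      have : (n : ℕ) - (n - 1 - j) = j + 1 := by omega
      have h2 : ((n - 1 - j : ℕ) : ℂ) + ((j : ℂ) + 1) = (n : ℂ) := by
        push_cast [← Nat.cast_add]
        norm_cast
        omega
      linear_combination -h2
    rw [hcast, map_mul]
    have : (starRingEnd ℂ) ((j : ℂ) + 1) = ((j : ℂ) + 1) := by
      rw [map_add, map_one, Complex.conj_natCast]
    rw [this]; ring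
  · have hj2 : n - 1 < j := by omega
    have hj3 : n < j + 1 := by omega
    rw [Polynomial.revAt_eq_self_of_lt hj2, Polynomial.revAt_eq_self_of_lt hj3]
    have hPj : P.coeff (j + 1) = 0 :=
      Polynomial.coeff_eq_zero_of_natDegree_lt (by omega)
    rw [hPj, map_zero, zero_mul, hR]
    by_cases hjn : j = n
    · subst hjn; simp
    · have : P.coeff j = 0 := Polynomial.coeff_eq_zero_of_natDegree_lt (by omega)
      rw [this, mul_zero, map_zero]

lemma lemXP (P : ℂ[X]) : ∀ m : ℕ, (X * Polynomial.derivative P).coeff m = (m : ℂ) * P.coeff m := by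
  intro m
  cases m with
  | zero => simp
  | succ s =>
    rw [Polynomial.coeff_X_mul, Polynomial.coeff_derivative]
    push_cast; ring

theorem stmt_11 (P Q : Polynomial ℂ) (n μ : ℕ) (k : ℝ)
    (hdeg : P.degree = n) (hμ1 : 1 ≤ μ) (hμn : μ ≤ n)
    (hgap : ∀ ν : ℕ, 1 ≤ ν → ν < μ → P.coeff ν = 0)
    (hk : 1 ≤ k)
    (hnz : ∀ z : ℂ, ‖z‖ < k → P.eval z ≠ 0)
    (hQ : Q = (P.map (starRingEnd ℂ)).reflect n) :
    ∀ z : ℂ, ‖z‖ = 1 →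
      k ^ μ * ‖(Polynomial.derivative P).eval z‖ ≤
        ‖(Polynomial.derivative Q).eval z‖ := by
  intro z₀ hz₀
  have hn1 : 1 ≤ n := le_trans hμ1 hμn
  have hnd : P.natDegree = n := Polynomial.natDegree_eq_of_degree_eq_some hdeg
  have hP0 : P ≠ 0 := by
    intro h
    rw [h] at hdeg
    simp only [Polynomial.degree_zero] at hdeg
    exact (by simpa using hdeg.symm.trans_le (le_refl _) : False)
  have hroots : ∀ z ∈ P.roots, k ≤ ‖z‖ := by
    intro z hzr
    by_contra hlt
    push_neg at hlt
    exact hnz z hlt ((Polynomial.mem_roots hP0).mp hzr)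
  set R : ℂ[X] := C (n : ℂ) * P - X * Polynomial.derivative P with hRdef
  have hReval : ∀ u : ℂ, R.eval u = (n : ℂ) * P.eval u - u * (Polynomial.derivative P).eval u := by
    intro u; simp [hRdef]
  -- |Q'(z₀)| = |R(z₀)|
  have hRdeg : R.natDegree ≤ n - 1 := by
    apply Polynomial.natDegree_le_iff_coeff_eq_zero.mpr
    intro m hm
    rw [hRdef, Polynomial.coeff_sub, Polynomial.coeff_C_mul, lemXP]
    by_cases hmn : m = n
    · subst hmn; ring
    · have : P.coeff m = 0 := Polynomial.coeff_eq_zero_of_natDegree_lt (by omega)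
      rw [this]; ring
  have hQR : ‖(Polynomial.derivative Q).eval z₀‖ = ‖R.eval z₀‖ := by
    rw [hQ, lem7 P hnd hn1, ← hRdef, lem6 R (n - 1) hRdeg z₀ hz₀]
  rw [hQR, hReval]
  -- roots bound from points inside closed ball of radius k
  have hroots_le : ∀ u : ℂ, ‖u‖ ≤ k → ∀ z ∈ P.roots, ‖u‖ ≤ ‖z‖ :=
    fun u hu z hz => le_trans hu (hroots z hz)
  rcases eq_or_lt_of_le hk with hk1 | hk1
  · -- k = 1
    rw [← hk1, one_pow, one_mul]
    have h3 := lem3 P hnd hP0 z₀ (hroots_le z₀ (by rw [hz₀, ← hk1]))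
    calc ‖(Polynomial.derivative P).eval z₀‖
        = ‖z₀ * (Polynomial.derivative P).eval z₀‖ := by
          rw [norm_mul, hz₀, one_mul]
      _ ≤ _ := h3
  · -- k > 1
    set N : ℂ[X] := X * Polynomial.derivative P with hNdef
    obtain ⟨M, hNM⟩ : X ^ μ ∣ N := by
      apply Polynomial.X_pow_dvd_iff.mpr
      intro d hd
      rw [hNdef, lemXP]
      rcases Nat.eq_zero_or_pos d with h | h
      · subst h; simp
      · rw [hgap d h hd, mul_zero]
    have hNeval : ∀ u : ℂ, u * (Polynomial.derivative P).eval u = u ^ μ * M.eval u := by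
      intro u
      have : N.eval u = u ^ μ * M.eval u := by rw [hNM]; simp
      rw [← this, hNdef]; simp
    have hRne : ∀ u : ℂ, ‖u‖ < k → R.eval u ≠ 0 := by
      intro u hu
      rw [hReval]
      exact lem4 P hnd hn1 u (hroots_le u (le_of_lt hu)) (hnz u hu)
    set f : ℂ → ℂ := fun u => M.eval u / R.eval u with hfdef
    have key : ∀ ρ : ℝ, 1 ≤ ρ → ρ < k → ‖f z₀‖ ≤ (ρ ^ μ)⁻¹ := by
      intro ρ hρ1 hρk
      have hρ0 : (0 : ℝ) < ρ := lt_of_lt_of_le one_pos hρ1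
      apply Complex.norm_le_of_forall_mem_frontier_norm_le
        (Metric.isBounded_ball (x := (0 : ℂ)) (r := ρ))
      · apply DifferentiableOn.diffContOnCl
        rw [closure_ball (0 : ℂ) (ne_of_gt hρ0)]
        apply DifferentiableOn.div
        · exact (M.differentiable).differentiableOn
        · exact (R.differentiable).differentiableOn
        · intro u hu
          apply hRne
          rw [Metric.mem_closedBall, dist_zero_right] at hu
          exact lt_of_le_of_lt hu hρk
      · intro u hu
        rw [frontier_ball (0 : ℂ) (ne_of_gt hρ0), mem_sphere_zero_iff_norm] at hu
        have huk : ‖u‖ < k := by rw [hu]; exact hρk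
        have h3 := lem3 P hnd hP0 u (hroots_le u (le_of_lt huk))
        rw [hNeval u] at h3
        have hRu : R.eval u ≠ 0 := hRne u huk
        rw [hfdef]
        simp only [norm_div]
        rw [div_le_iff₀ (norm_pos_iff.mpr hRu)]
        have habs : ‖u ^ μ * M.eval u‖ = ρ ^ μ * ‖M.eval u‖ := by
          rw [norm_mul, norm_pow]
          rw [hu]
        rw [habs] at h3
        rw [hReval u, hNeval u]
        calc ‖M.eval u‖
            = (ρ ^ μ)⁻¹ * (ρ ^ μ * ‖M.eval u‖) := by
              field_simp
          _ ≤ (ρ ^ μ)⁻¹ * ‖(n : ℂ) * P.eval u - u ^ μ * M.eval u‖ := by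
              apply mul_le_mul_of_nonneg_left h3 (by positivity)
          _ = _ := by ring
      · rw [closure_ball (0 : ℂ) (ne_of_gt hρ0), Metric.mem_closedBall, dist_zero_right,
          hz₀]
        exact hρ1
    have hlim : ‖f z₀‖ ≤ (k ^ μ)⁻¹ := by
      have ht : Filter.Tendsto (fun ρ : ℝ => (ρ ^ μ)⁻¹) (𝓝[<] k) (𝓝 ((k ^ μ)⁻¹)) := by
        apply Filter.Tendsto.inv₀
        · exact ((continuous_pow μ).tendsto k).mono_left nhdsWithin_le_nhds
        · positivity
      have hev : ∀ᶠ ρ in 𝓝[<] k, ‖f z₀‖ ≤ (ρ ^ μ)⁻¹ := by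
        filter_upwards [Ioo_mem_nhdsLT_of_mem (Set.mem_Ioc.mpr ⟨hk1, le_refl k⟩)] with ρ hρ
        exact key ρ (le_of_lt hρ.1) hρ.2
      exact ge_of_tendsto ht hev
    -- conclude
    have hRz₀ : R.eval z₀ ≠ 0 := hRne z₀ (by rw [hz₀]; exact hk1)
    have hMz₀ : ‖M.eval z₀‖ = ‖(Polynomial.derivative P).eval z₀‖ := by
      have h1 : ‖z₀ * (Polynomial.derivative P).eval z₀‖
          = ‖(Polynomial.derivative P).eval z₀‖ := by rw [norm_mul, hz₀, one_mul]
      have h2 : ‖z₀ ^ μ * M.eval z₀‖ = ‖M.eval z₀‖ := by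
        rw [norm_mul, norm_pow, hz₀, one_pow, one_mul]
      rw [← h2, ← hNeval z₀, h1]
    rw [hfdef] at hlim
    simp only [norm_div] at hlim
    rw [div_le_iff₀ (norm_pos_iff.mpr hRz₀)] at hlim
    rw [hMz₀] at hlim
    have hkpos : (0:ℝ) < k ^ μ := by positivity
    rw [← hReval]
    calc k ^ μ * ‖(Polynomial.derivative P).eval z₀‖
        ≤ k ^ μ * ((k ^ μ)⁻¹ * ‖R.eval z₀‖) :=
          mul_le_mul_of_nonneg_left hlim (le_of_lt hkpos)
      _ = ‖R.eval z₀‖ := by field_simp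
end

section
/- Let P(z) = a_n z^n + Σ_{ν=μ}^{n} a_{n−ν} z^{n−ν}, where 1 ≤ μ ≤ n, be a polynomial of degree n (so the coefficients of z^{n−1}, ..., z^{n−μ+1} all vanish) having all its zeros in |z| ≤ k, where k ≤ 1, and let Q(z) = z^n · conj(P(1/conj(z))) be its reverse polynomial. Then for every z with |z| = 1, k^μ · |P'(z)| ≥ |Q'(z)|. -/
open Polynomial Complex Metric Filter


lemma aux_coeff_comp_C_mul_X (p : ℂ[X]) (z : ℂ) (i : ℕ) :
    (p.comp (C z * X)).coeff i = z ^ i * p.coeff i := by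
  induction p using Polynomial.induction_on' with
  | add p q hp hq => simp [add_comp, hp, hq, mul_add]
  | monomial m a =>
    rw [monomial_comp]
    rw [mul_pow, ← C_pow, ← mul_assoc, ← C_mul]
    simp only [coeff_monomial, coeff_C_mul, coeff_X_pow]
    by_cases h : m = i
    · simp [h, mul_comm]
    · rw [if_neg h, if_neg (fun hi => h hi.symm), mul_zero]
      · ring

lemma aux_reflect_prod_linear (s : Multiset ℂ[X]) (h : ∀ p ∈ s, p.natDegree ≤ 1) :
    reflect (Multiset.card s) s.prod = (s.map (reflect 1)).prod := by
  induction s using Multiset.induction_on with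
  | empty => simp [reflect_one]
  | cons a s ih =>
    have hdeg : s.prod.natDegree ≤ Multiset.card s := by
      refine le_trans (natDegree_multiset_prod_le _) ?_
      refine le_trans (Multiset.sum_le_card_nsmul _ 1 ?_) (by simp)
      intro x hx
      simp only [Multiset.mem_map] at hx
      obtain ⟨p, hp, rfl⟩ := hx
      exact h p (Multiset.mem_cons_of_mem hp)
    rw [Multiset.card_cons, Multiset.prod_cons, add_comm,
      reflect_mul _ _ (h a (Multiset.mem_cons_self a s)) hdeg,
      Multiset.map_cons, Multiset.prod_cons,
      ih (fun p hp => h p (Multiset.mem_cons_of_mem hp))]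


lemma aux_deriv_eval_prod (z t : ℂ) (s : Multiset ℂ) (h : ∀ r ∈ s, z - r * t ≠ 0) :
    (derivative ((s.map fun r => C z - C r * X).prod)).eval t
      = ((s.map fun r => C z - C r * X).prod).eval t * (s.map fun r => -r / (z - r * t)).sum := by
  induction s using Multiset.induction_on with
  | empty => simp
  | cons a s ih =>
    have ha : z - a * t ≠ 0 := h a (Multiset.mem_cons_self a s)
    simp only [Multiset.map_cons, Multiset.prod_cons, Multiset.sum_cons,
      derivative_mul, eval_add, eval_mul, eval_sub, eval_C, eval_mul, eval_X]
    rw [ih (fun r hr => h r (Multiset.mem_cons_of_mem hr))]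
    have hd : (derivative (C z - C a * X)).eval t = -a := by
      simp [derivative_sub, derivative_C_mul]
    rw [hd]
    field_simp

lemma aux_half_re (z r t : ℂ) (hz : ‖z‖ = 1) (hrt : ‖r * t‖ ≤ 1)
    (hne : z - r * t ≠ 0) : 1 / 2 ≤ (z / (z - r * t)).re := by
  have hns : Complex.normSq (z - r * t) > 0 := by
    rw [gt_iff_lt, Complex.normSq_pos]; exact hne
  rw [Complex.div_re]
  rw [← add_div, le_div_iff₀ hns]
  have h1 : z.re ^ 2 + z.im ^ 2 = 1 := by
    have := Complex.sq_norm z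
    rw [hz] at this
    simp [Complex.normSq_apply] at this
    nlinarith [this]
  have h2 : (r * t).re ^ 2 + (r * t).im ^ 2 ≤ 1 := by
    nlinarith [Complex.sq_norm (r*t), hrt, norm_nonneg (r*t),
      Complex.normSq_apply (r*t)]
  simp only [Complex.normSq_apply, Complex.sub_re, Complex.sub_im]
  nlinarith [h1, h2]

lemma aux_main (R : Multiset ℂ) (z : ℂ) (k : ℝ) (μ n : ℕ)
    (hn : Multiset.card R = n) (hz : ‖z‖ = 1) (hk0 : 0 < k) (hk1 : k ≤ 1)
    (hn1 : 1 ≤ n) (hμ1 : 1 ≤ μ)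
    (hroots : ∀ r ∈ R, ‖r‖ ≤ k)
    (hcoeff : ∀ m, 1 ≤ m → m < μ → ((R.map fun r => C z - C r * X).prod).coeff m = 0) :
    ‖(X * derivative (R.map fun r => C z - C r * X).prod).eval 1‖
      ≤ k ^ μ * ‖((C (n : ℂ)) * (R.map fun r => C z - C r * X).prod
          - X * derivative (R.map fun r => C z - C r * X).prod).eval 1‖ := by
  set H : ℂ[X] := (R.map fun r => C z - C r * X).prod with hH
  set Np : ℂ[X] := X * derivative H with hNp
  set Dp : ℂ[X] := C (n : ℂ) * H - X * derivative H with hDp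
  -- factor nonvanishing
  have hfac : ∀ (t : ℂ), ‖t‖ * k < 1 → ∀ r ∈ R, z - r * t ≠ 0 := by
    intro t ht r hr hzero
    have h1 : z = r * t := by linear_combination hzero
    have : ‖z‖ = ‖r‖ * ‖t‖ := by rw [h1, norm_mul]
    rw [hz] at this
    have hle : ‖r‖ * ‖t‖ ≤ k * ‖t‖ :=
      mul_le_mul_of_nonneg_right (hroots r hr) (norm_nonneg t)
    rw [mul_comm k _] at hle
    linarith
  -- key structure at points where H doesn't vanish
  have hkey : ∀ (t : ℂ), ‖t‖ * k ≤ 1 → H.eval t ≠ 0 →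
      ∃ B : ℂ, (n : ℝ) / 2 ≤ B.re ∧ Np.eval t = H.eval t * ((n : ℂ) - B)
        ∧ Dp.eval t = H.eval t * B := by
    intro t ht hHt
    have hDv : Dp.eval t = (n : ℂ) * H.eval t - Np.eval t := by
      simp [hDp, hNp]
    · -- all factors nonzero
      have hfac' : ∀ r ∈ R, z - r * t ≠ 0 := by
        intro r hr hzero
        apply hHt
        rw [hH, eval_multiset_prod]
        apply Multiset.prod_eq_zero
        rw [Multiset.map_map]
        refine Multiset.mem_map.mpr ⟨r, hr, ?_⟩
        simp [hzero]
      set B : ℂ := (R.map fun r => z / (z - r * t)).sum with hB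
      have hNt : Np.eval t = H.eval t * ((n : ℂ) - B) := by
        have h1 : Np.eval t = t * ((derivative H).eval t) := by simp [hNp]
        rw [h1, aux_deriv_eval_prod z t R hfac']
        have hSt : t * (R.map fun r => -r / (z - r * t)).sum = (n : ℂ) - B := by
          rw [← Multiset.sum_map_mul_left]
          have hsum : ((R.map fun r => z / (z - r * t)).sum
              + (R.map fun r => t * (-r / (z - r * t))).sum) = (n : ℂ) := by
            rw [← Multiset.sum_map_add]
            have : (R.map fun r => z / (z - r * t) + t * (-r / (z - r * t)))
                = R.map fun _ => (1 : ℂ) := by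
              apply Multiset.map_congr rfl
              intro r hr
              have h0 := hfac' r hr
              field_simp
              ring
            rw [this, Multiset.map_const', Multiset.sum_replicate, hn]
            simp
          rw [← hB] at hsum
          linear_combination hsum
        rw [← hSt]; ring
      have hRe : (n : ℝ) / 2 ≤ B.re := by
        have : B.re = ((R.map fun r => z / (z - r * t)).map Complex.re).sum := by
          rw [hB]
          exact map_multiset_sum Complex.reAddGroupHom _
        rw [this, Multiset.map_map]
        have hcard : Multiset.card (R.map (Complex.re ∘ fun r => z / (z - r * t))) = n := by
          simp [hn]
        have := Multiset.card_nsmul_le_sum (s := R.map (Complex.re ∘ fun r => z / (z - r * t)))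
          (a := (1:ℝ)/2) ?_
        · rw [hcard] at this
          calc (n : ℝ) / 2 = n • ((1:ℝ)/2) := by
                simp [nsmul_eq_mul]; ring
            _ ≤ _ := this
        · intro x hx
          rw [Multiset.mem_map] at hx
          obtain ⟨r, hr, rfl⟩ := hx
          refine aux_half_re z r t hz ?_ (hfac' r hr)
          rw [norm_mul]
          calc ‖r‖ * ‖t‖ ≤ k * ‖t‖ :=
                mul_le_mul_of_nonneg_right (hroots r hr) (norm_nonneg t)
            _ ≤ 1 := by rw [mul_comm]; exact ht
      have hDt : Dp.eval t = H.eval t * B := by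
        rw [hDv, hNt]; ring
      exact ⟨B, hRe, hNt, hDt⟩
  -- pointwise inequality
  have hPW : ∀ (t : ℂ), ‖t‖ * k ≤ 1 →
      ‖Np.eval t‖ ≤ ‖Dp.eval t‖ := by
    intro t ht
    by_cases hHt : H.eval t = 0
    · have hDv : Dp.eval t = (n : ℂ) * H.eval t - Np.eval t := by
        simp [hDp, hNp]
      rw [hDv, hHt, mul_zero, zero_sub, norm_neg]
    · obtain ⟨B, hRe, hNt, hDt⟩ := hkey t ht hHt
      rw [hNt, hDt, norm_mul, norm_mul]
      apply mul_le_mul_of_nonneg_left _ (norm_nonneg _)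
      -- |n - B| ≤ |B|
      have h1 : ‖(n:ℂ) - B‖ ^ 2 ≤ ‖B‖ ^ 2 := by
        rw [Complex.sq_norm, Complex.sq_norm]
        simp only [Complex.normSq_apply, Complex.sub_re, Complex.sub_im,
          Complex.natCast_re, Complex.natCast_im]
        have hn0 : (0:ℝ) ≤ (n:ℝ) := Nat.cast_nonneg n
        nlinarith [hRe]
      nlinarith [norm_nonneg ((n:ℂ) - B), norm_nonneg B, h1]
  -- H nonvanishing in |t| k < 1
  have hHnz : ∀ t : ℂ, ‖t‖ * k < 1 → H.eval t ≠ 0 := by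
    intro t ht
    rw [hH, eval_multiset_prod, Multiset.map_map]
    apply Multiset.prod_ne_zero
    rw [Multiset.mem_map]
    rintro ⟨r, hr, hzero⟩
    exact hfac t ht r hr (by simpa using hzero)
  -- Dp nonvanishing in |t| k < 1
  have hn0 : (0:ℝ) < (n:ℝ) := by exact_mod_cast hn1
  have hDnz : ∀ t : ℂ, ‖t‖ * k < 1 → Dp.eval t ≠ 0 := by
    intro t ht
    obtain ⟨B, hRe, _, hDt⟩ := hkey t (le_of_lt ht) (hHnz t ht)
    rw [hDt]
    refine mul_ne_zero (hHnz t ht) ?_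
    intro hB0
    rw [hB0] at hRe
    simp at hRe
    linarith
  -- extract M with Np = X^μ * M
  obtain ⟨M, hM⟩ : (X : ℂ[X]) ^ μ ∣ Np := by
    rw [X_pow_dvd_iff]
    intro d hd
    match d with
    | 0 => simp [hNp, Polynomial.mul_coeff_zero]
    | (j+1) =>
      rw [hNp, coeff_X_mul, coeff_derivative, hcoeff (j+1) (Nat.succ_le_succ (Nat.zero_le j)) hd,
        zero_mul]
  have hNpM : ∀ t : ℂ, Np.eval t = t ^ μ * M.eval t := by
    intro t; rw [hM]; simp
  have habs1 : ‖Np.eval 1‖ = ‖M.eval 1‖ := by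
    rw [hNpM 1]; simp
  by_cases hk1' : k = 1
  · -- easy case
    subst hk1'
    rw [one_pow, one_mul]
    exact hPW 1 (by simp)
  · have hklt : k < 1 := lt_of_le_of_ne hk1 hk1'
    have hkinv : 1 < k⁻¹ := (one_lt_inv₀ hk0).mpr hklt
    -- for each ρ ∈ [1, k⁻¹), max modulus bound
    have hstep : ∀ ρ : ℝ, 1 ≤ ρ → ρ < k⁻¹ →
        ‖M.eval 1‖ ≤ ρ⁻¹ ^ μ * ‖Dp.eval 1‖ := by
      intro ρ hρ1 hρk
      have hρ0 : (0:ℝ) < ρ := lt_of_lt_of_le one_pos hρ1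
      have hρk' : ρ * k < 1 := (lt_div_iff₀ hk0).mp (by rwa [one_div])
      have hnz : ∀ t : ℂ, ‖t‖ ≤ ρ → Dp.eval t ≠ 0 := by
        intro t htρ
        refine hDnz t (lt_of_le_of_lt ?_ hρk')
        exact mul_le_mul_of_nonneg_right htρ (le_of_lt hk0)
      set f : ℂ → ℂ := fun t => M.eval t / Dp.eval t with hf
      have hcl : closure (ball (0:ℂ) ρ) = closedBall 0 ρ := closure_ball 0 (ne_of_gt hρ0)
      have hdiff : DiffContOnCl ℂ f (ball (0:ℂ) ρ) := by
        apply DifferentiableOn.diffContOnCl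
        rw [hcl]
        apply DifferentiableOn.div
        · exact (M.differentiable).differentiableOn
        · exact (Dp.differentiable).differentiableOn
        · intro t htm
          rw [mem_closedBall, dist_zero_right] at htm
          exact hnz t htm
      have hfr : ∀ t ∈ frontier (ball (0:ℂ) ρ), ‖f t‖ ≤ ρ⁻¹ ^ μ := by
        intro t htm
        rw [frontier_ball 0 (ne_of_gt hρ0), mem_sphere, dist_zero_right] at htm
        have htabs : ‖t‖ = ρ := htm
        have hPWt : ‖Np.eval t‖ ≤ ‖Dp.eval t‖ :=
          hPW t (by rw [htabs]; exact le_of_lt hρk')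
        rw [hNpM t, norm_mul, norm_pow, htabs] at hPWt
        have hDpos : 0 < ‖Dp.eval t‖ := by
          refine (norm_pos_iff).mpr (hnz t (le_of_eq htabs))
        rw [hf]
        simp only [norm_div]
        rw [div_le_iff₀ hDpos, inv_pow, inv_mul_eq_div, le_div_iff₀ (pow_pos hρ0 μ)]
        rw [mul_comm]
        exact hPWt
      have hmem1 : (1:ℂ) ∈ closure (ball (0:ℂ) ρ) := by
        rw [hcl, mem_closedBall, dist_zero_right]
        simpa using hρ1
      have hmax := Complex.norm_le_of_forall_mem_frontier_norm_le isBounded_ball hdiff hfr hmem1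
      rw [hf] at hmax
      simp only [norm_div] at hmax
      have hD1 : 0 < ‖Dp.eval 1‖ := by
        refine (norm_pos_iff).mpr (hnz 1 (by simpa using hρ1))
      rw [div_le_iff₀ hD1] at hmax
      exact hmax
    -- limit argument
    rw [habs1]
    have htend : Tendsto (fun ρ : ℝ => ρ⁻¹ ^ μ * ‖Dp.eval 1‖)
        (nhdsWithin k⁻¹ (Set.Iio k⁻¹)) (nhds (k ^ μ * ‖Dp.eval 1‖)) := by
      have hc : ContinuousAt (fun ρ : ℝ => ρ⁻¹ ^ μ * ‖Dp.eval 1‖) k⁻¹ := by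
        have h1 : ContinuousAt (fun ρ : ℝ => ρ⁻¹) k⁻¹ :=
          continuousAt_inv₀ (ne_of_gt (lt_trans one_pos hkinv))
        exact ((h1.pow μ).mul continuousAt_const)
      have := hc.continuousWithinAt (s := Set.Iio k⁻¹)
      have heq : (k⁻¹)⁻¹ ^ μ * ‖Dp.eval 1‖ = k ^ μ * ‖Dp.eval 1‖ := by
        rw [inv_inv]
      rw [ContinuousWithinAt] at this
      rwa [heq] at this
    refine ge_of_tendsto htend ?_
    have hmem : Set.Ioi (1:ℝ) ∈ nhdsWithin k⁻¹ (Set.Iio k⁻¹) :=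
      nhdsWithin_le_nhds (isOpen_Ioi.mem_nhds hkinv)
    filter_upwards [hmem, self_mem_nhdsWithin] with ρ h1 h2
    exact hstep ρ (le_of_lt h1) h2



theorem stmt_12 (P Q : Polynomial ℂ) (n μ : ℕ) (k : ℝ)
    (hdeg : P.degree = n) (hμ1 : 1 ≤ μ) (hμn : μ ≤ n)
    (hgap : ∀ ν : ℕ, 1 ≤ ν → ν < μ → P.coeff (n - ν) = 0)
    (hk : k ≤ 1)
    (hzeros : ∀ z : ℂ, P.eval z = 0 → ‖z‖ ≤ k)
    (hQ : Q = (P.map (starRingEnd ℂ)).reflect n) :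
    ∀ z : ℂ, ‖z‖ = 1 →
      ‖(Polynomial.derivative Q).eval z‖ ≤
        k ^ μ * ‖(Polynomial.derivative P).eval z‖ := by
  intro z hz
  have hn1 : 1 ≤ n := le_trans hμ1 hμn
  have hP0 : P ≠ 0 := by
    intro h
    rw [h, degree_zero] at hdeg
    exact absurd hdeg (by simp)
  have hnat : P.natDegree = n := natDegree_eq_of_degree_eq_some hdeg
  set a : ℂ := P.leadingCoeff with ha
  have ha0 : a ≠ 0 := leadingCoeff_ne_zero.mpr hP0
  have hsplit : Splits P := IsAlgClosed.splits P
  set R : Multiset ℂ := P.roots with hR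
  have hcard : Multiset.card R = n := by
    rw [hR, ← hnat]
    exact IsAlgClosed.card_roots_eq_natDegree
  have hPfac : P = C a * (R.map fun r => X - C r).prod :=
    (C_leadingCoeff_mul_prod_multiset_X_sub_C (hcard.trans hnat.symm)).symm
  have hroots : ∀ r ∈ R, ‖r‖ ≤ k := by
    intro r hr
    exact hzeros r (isRoot_of_mem_roots hr)
  have hk0 : 0 ≤ k := by
    have hex : ∃ r, r ∈ R := by
      rw [← Multiset.card_pos_iff_exists_mem, hcard]; omega
    obtain ⟨r, hr⟩ := hex
    exact le_trans (norm_nonneg r) (hroots r hr)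
  rcases eq_or_lt_of_le hk0 with hk0' | hk0'
  · -- k = 0 : P = a X^n, Q is constant
    have hRrep : R = Multiset.replicate n 0 := by
      rw [← hcard]
      rw [Multiset.eq_replicate_card]
      intro b hb
      have := hroots b hb
      rw [← hk0'] at this
      have := le_antisymm this (norm_nonneg b)
      exact norm_eq_zero.mp this
    have hPX : P = C a * X ^ n := by
      rw [hPfac, hRrep]
      congr 1
      rw [Multiset.map_replicate, Multiset.prod_replicate]
      simp
    have hQC : Q = C ((starRingEnd ℂ) a) := by
      rw [hQ, hPX]
      rw [Polynomial.map_mul, Polynomial.map_C, Polynomial.map_pow, Polynomial.map_X]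
      rw [reflect_C_mul_X_pow]
      rw [revAt_le (le_refl n), Nat.sub_self, pow_zero, mul_one]
    rw [hQC, derivative_C]
    simp only [eval_zero, norm_zero]
    positivity
  · -- main case : 0 < k
    set H : ℂ[X] := (R.map fun r => C z - C r * X).prod with hH
    set G : ℂ[X] := (R.map fun r => C z * X - C r).prod with hG
    -- comp identity
    have hcomp : P.comp (C z * X) = C a * G := by
      rw [hPfac, mul_comp, C_comp, multiset_prod_comp, Multiset.map_map]
      congr 2
      apply Multiset.map_congr rfl
      intro r _
      simp [sub_comp]
    have hGcoeff : ∀ j, a * G.coeff j = z ^ j * P.coeff j := by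
      intro j
      have h1 := aux_coeff_comp_C_mul_X P z j
      rw [hcomp, coeff_C_mul] at h1
      exact h1
    -- H = reflect n G
    have hHG : H = reflect n G := by
      have hcard' : Multiset.card (R.map fun r => C z * X - C r) = n := by
        rw [Multiset.card_map, hcard]
      have hlin : ∀ p ∈ R.map fun r => C z * X - C r, p.natDegree ≤ 1 := by
        intro p hp
        rw [Multiset.mem_map] at hp
        obtain ⟨r, _, rfl⟩ := hp
        refine le_trans (natDegree_sub_le _ _) ?_
        simp [natDegree_C_mul_le]
        exact natDegree_C_mul_le z X |>.trans (by simp)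
      have := aux_reflect_prod_linear (R.map fun r => C z * X - C r) hlin
      rw [hcard'] at this
      rw [hH, hG, this, Multiset.map_map]
      congr 1
      apply Multiset.map_congr rfl
      intro r _
      simp only [Function.comp_apply]
      have hsplit1 : C z * X - C r = C (-r) * X ^ 0 + C z * X ^ 1 := by
        simp [pow_one]; ring
      rw [hsplit1, reflect_add, reflect_C_mul_X_pow, reflect_C_mul_X_pow,
        revAt_le (by norm_num : (0:ℕ) ≤ 1), revAt_le (le_refl 1)]
      simp
      ring
    have hHcoeff : ∀ m, m ≤ n → a * H.coeff m = z ^ (n - m) * P.coeff (n - m) := by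
      intro m hm
      rw [hHG, coeff_reflect, revAt_le hm, hGcoeff]
    -- gap coefficients vanish
    have hcoeffH : ∀ m, 1 ≤ m → m < μ → H.coeff m = 0 := by
      intro m h1 h2
      have := hHcoeff m (le_trans (le_of_lt h2) hμn)
      rw [hgap m h1 h2, mul_zero] at this
      rcases mul_eq_zero.mp this with h | h
      · exact absurd h ha0
      · exact h
    -- degree bounds
    have hHdeg : H.natDegree ≤ n := by
      rw [hH]
      refine le_trans (natDegree_multiset_prod_le _) ?_
      refine le_trans (Multiset.sum_le_card_nsmul _ 1 ?_) (by simp [hcard])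
      intro x hx
      rw [Multiset.map_map, Multiset.mem_map] at hx
      obtain ⟨r, _, rfl⟩ := hx
      simp only [Function.comp_apply]
      refine le_trans (natDegree_sub_le _ _) ?_
      simp only [natDegree_C, max_le_iff]
      constructor
      · omega
      · exact (natDegree_C_mul_le r X).trans (by simp)
    set Np : ℂ[X] := X * derivative H with hNp
    set Dp : ℂ[X] := C (n : ℂ) * H - X * derivative H with hDp
    have hNpdeg : Np.natDegree ≤ n := by
      rw [hNp]
      refine le_trans (natDegree_mul_le) ?_
      have h1 : (derivative H).natDegree ≤ n - 1 :=
        le_trans (natDegree_derivative_le H) (by omega)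
      simp only [natDegree_X]
      omega
    have hDpdeg : Dp.natDegree ≤ n := by
      rw [hDp]
      refine le_trans (natDegree_sub_le _ _) ?_
      rw [max_le_iff]
      refine ⟨le_trans (natDegree_C_mul_le _ _) hHdeg, ?_⟩
      rw [← hNp]; exact hNpdeg
    have hNpc : ∀ i, Np.coeff i = (i : ℂ) * H.coeff i := by
      intro i
      match i with
      | 0 => simp [hNp, Polynomial.mul_coeff_zero]
      | (j+1) =>
        rw [hNp, coeff_X_mul, coeff_derivative]
        push_cast
        ring
    have hDpc : ∀ i, Dp.coeff i = ((n : ℂ) - (i : ℂ)) * H.coeff i := by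
      intro i
      rw [hDp, coeff_sub, coeff_C_mul, ← hNp, hNpc]
      ring
    have hcast : ∀ i : ℕ, i ≤ n → (((n - i : ℕ)) : ℂ) = (n : ℂ) - (i : ℂ) := by
      intro i hi
      push_cast [Nat.cast_sub hi]
      ring
    -- identity I2
    have hI2 : z * (derivative P).eval z = a * Dp.eval 1 := by
      have hPd : (derivative P).eval z
          = ∑ i ∈ Finset.range (n+1), (derivative P).coeff i * z ^ i :=
        eval_eq_sum_range' (Nat.lt_succ_of_le (le_trans (natDegree_derivative_le P)
          (by rw [hnat]; omega))) z
      have hDd : Dp.eval 1 = ∑ i ∈ Finset.range (n+1), Dp.coeff i := by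
        rw [eval_eq_sum_range' (Nat.lt_succ_of_le hDpdeg) 1]
        simp
      rw [hPd, hDd, Finset.mul_sum, Finset.mul_sum]
      have hA : ∀ i ∈ Finset.range (n+1),
          a * Dp.coeff i
            = ((n + 1 - 1 - i : ℕ) : ℂ) * z ^ (n + 1 - 1 - i) * P.coeff (n + 1 - 1 - i) := by
        intro i hi
        rw [Finset.mem_range] at hi
        have he : n + 1 - 1 - i = n - i := by omega
        rw [he, hcast i (by omega), hDpc i]
        have h1 := hHcoeff i (by omega)
        calc a * (((n:ℂ) - i) * H.coeff i) = ((n:ℂ) - i) * (a * H.coeff i) := by ring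
          _ = ((n:ℂ) - i) * (z ^ (n-i) * P.coeff (n-i)) := by rw [h1]
          _ = _ := by ring
      rw [Finset.sum_congr rfl hA,
        Finset.sum_range_reflect (fun j => ((j:ℕ):ℂ) * z ^ j * P.coeff j) (n+1)]
      rw [Finset.sum_range_succ' (fun j => ((j:ℕ):ℂ) * z ^ j * P.coeff j) n]
      simp only [Nat.cast_zero, zero_mul, add_zero]
      rw [Finset.sum_range_succ]
      have htop : z * ((derivative P).coeff n * z ^ n) = 0 := by
        rw [coeff_derivative, coeff_eq_zero_of_natDegree_lt (by omega : P.natDegree < n + 1)]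
        ring
      rw [htop, add_zero]
      apply Finset.sum_congr rfl
      intro i hi
      rw [coeff_derivative]
      push_cast
      ring
    -- Q degree facts
    have hQdeg : Q.natDegree ≤ n := by
      rw [hQ]
      apply natDegree_le_iff_coeff_eq_zero.mpr
      intro N hN
      rw [coeff_reflect, revAt_eq_self_of_lt hN, coeff_map]
      rw [coeff_eq_zero_of_natDegree_lt (by omega : P.natDegree < N)]
      simp
    have hzz : z * (starRingEnd ℂ) z = 1 := by
      rw [Complex.mul_conj, Complex.normSq_eq_norm_sq, hz]
      norm_num
    -- identity I1
    have hI1 : z ^ (n-1) * (starRingEnd ℂ) ((derivative Q).eval z) = a * Np.eval 1 := by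
      have hQ'd : (derivative Q).natDegree < n :=
        lt_of_le_of_lt (le_trans (natDegree_derivative_le Q) (Nat.sub_le_sub_right hQdeg 1))
          (by omega : n - 1 < n)
      have hQd : (derivative Q).eval z
          = ∑ j ∈ Finset.range n, (derivative Q).coeff j * z ^ j :=
        eval_eq_sum_range' hQ'd z
      have hNd : Np.eval 1 = ∑ i ∈ Finset.range (n+1), Np.coeff i := by
        rw [eval_eq_sum_range' (Nat.lt_succ_of_le hNpdeg) 1]; simp
      rw [hQd, hNd, map_sum, Finset.mul_sum, Finset.mul_sum]
      have hA : ∀ i ∈ Finset.range (n+1),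
          a * Np.coeff i
            = ((n - (n + 1 - 1 - i) : ℕ) : ℂ) * z ^ (n + 1 - 1 - i) * P.coeff (n + 1 - 1 - i) := by
        intro i hi
        rw [Finset.mem_range] at hi
        have he : n + 1 - 1 - i = n - i := by omega
        have he2 : n - (n - i) = i := by omega
        rw [he, he2, hNpc i]
        calc a * ((i:ℂ) * H.coeff i) = (i:ℂ) * (a * H.coeff i) := by ring
          _ = (i:ℂ) * (z ^ (n-i) * P.coeff (n-i)) := by rw [hHcoeff i (by omega)]
          _ = _ := by ring
      rw [Finset.sum_congr rfl hA,
        Finset.sum_range_reflect (fun j => ((n - j : ℕ) : ℂ) * z ^ j * P.coeff j) (n+1),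
        Finset.sum_range_succ]
      simp only [Nat.sub_self, Nat.cast_zero, zero_mul, add_zero]
      have hB : ∀ j ∈ Finset.range n,
          z ^ (n-1) * (starRingEnd ℂ) ((derivative Q).coeff j * z ^ j)
            = ((n - (n - 1 - j) : ℕ) : ℂ) * z ^ (n - 1 - j) * P.coeff (n - 1 - j) := by
        intro j hj
        rw [Finset.mem_range] at hj
        have hQc : (derivative Q).coeff j = (starRingEnd ℂ) (P.coeff (n - 1 - j)) * (j+1 : ℕ) := by
          rw [coeff_derivative, hQ, coeff_reflect, revAt_le (by omega : j + 1 ≤ n), coeff_map]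
          have : n - (j+1) = n - 1 - j := by omega
          rw [this]
          push_cast
          ring
        rw [hQc]
        rw [map_mul, map_mul, RingHomCompTriple.comp_apply, map_natCast, map_pow]
        have hsplitpow : z ^ (n-1) = z ^ (n-1-j) * z ^ j := by
          rw [← pow_add]
          congr 1
          omega
        have hone : z ^ j * ((starRingEnd ℂ) z) ^ j = 1 := by
          rw [← mul_pow, hzz, one_pow]
        have he3 : n - (n - 1 - j) = j + 1 := by omega
        rw [he3]
        calc z ^ (n-1) * (P.coeff (n-1-j) * (j+1:ℕ) * ((starRingEnd ℂ) z) ^ j)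
            = ((j+1:ℕ):ℂ) * P.coeff (n-1-j) * (z ^ (n-1-j) * (z ^ j * ((starRingEnd ℂ) z) ^ j)) := by
              rw [hsplitpow]; push_cast; ring
          _ = ((j+1:ℕ):ℂ) * z ^ (n-1-j) * P.coeff (n-1-j) := by rw [hone]; push_cast; ring
      rw [Finset.sum_congr rfl hB,
        Finset.sum_range_reflect (fun i => ((n - i : ℕ) : ℂ) * z ^ i * P.coeff i) n]
    have habsQ : ‖(derivative Q).eval z‖
        = ‖a‖ * ‖Np.eval 1‖ := by
      have h := congrArg norm hI1
      rwa [norm_mul, norm_mul, norm_pow, hz, one_pow, one_mul, Complex.norm_conj] at h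
    have habsP : ‖(derivative P).eval z‖
        = ‖a‖ * ‖Dp.eval 1‖ := by
      have h := congrArg norm hI2
      rwa [norm_mul, norm_mul, hz, one_mul] at h
    rw [habsQ, habsP]
    have hmain := aux_main R z k μ n hcard hz hk0' hk hn1 hμ1 hroots hcoeffH
    rw [← hH, ← hDp, ← hNp] at hmain
    calc ‖a‖ * ‖Np.eval 1‖
        ≤ ‖a‖ * (k ^ μ * ‖Dp.eval 1‖) :=
          mul_le_mul_of_nonneg_left hmain (norm_nonneg a)
      _ = k ^ μ * (‖a‖ * ‖Dp.eval 1‖) := by ring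
end

section
/- Let P(z) be a polynomial of degree n with complex coefficients having all its zeros in |z| ≤ k, where k ≤ 1. Then for every complex number α with |α| ≥ k and every z with |z| = 1, one has |D_α P(z)| ≥ (|α| − k)·|P'(z)|. -/
lemma aux_key (k m : ℝ) (hk0 : 0 ≤ k) (hk1 : k ≤ 1) (hm : 1 ≤ m) (a b : ℂ)
    (ha : ‖a - (m:ℂ)‖ ≤ k * ‖a‖)
    (hb : ‖b - 1‖ ≤ k * ‖b‖) :
    ‖a + b - ((m:ℂ) + 1)‖ ≤ k * ‖a + b‖ := by
  have ha2 : Complex.normSq (a - (m:ℂ)) ≤ k^2 * Complex.normSq a := by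
    have h := pow_le_pow_left₀ (norm_nonneg _) ha 2
    rwa [mul_pow, Complex.sq_norm, Complex.sq_norm] at h
  have hb2 : Complex.normSq (b - 1) ≤ k^2 * Complex.normSq b := by
    have h := pow_le_pow_left₀ (norm_nonneg _) hb 2
    rwa [mul_pow, Complex.sq_norm, Complex.sq_norm] at h
  have target2 : Complex.normSq (a + b - ((m:ℂ) + 1)) ≤ k^2 * Complex.normSq (a + b) := by
    simp only [Complex.normSq_apply, Complex.sub_re, Complex.add_re, Complex.ofReal_re,
      Complex.sub_im, Complex.add_im, Complex.ofReal_im, Complex.one_re, Complex.one_im] at ha2 hb2 ⊢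
    have hK : (0:ℝ) ≤ 1 - k^2 := by nlinarith
    have hC : (0:ℝ) ≤ (1 - k^2) * ((a.re - m*b.re)^2 + (a.im - m*b.im)^2) :=
      mul_nonneg hK (by positivity)
    nlinarith [hC, ha2, mul_le_mul_of_nonneg_left hb2 (sq_nonneg m), hm, sq_nonneg (m - 1)]
  have h1 : ‖a + b - ((m:ℂ) + 1)‖ ^ 2 ≤ (k * ‖a + b‖)^2 := by
    rw [mul_pow, Complex.sq_norm, Complex.sq_norm]; exact target2
  exact (pow_le_pow_iff_left₀ (norm_nonneg _)
    (mul_nonneg hk0 (norm_nonneg _)) two_ne_zero).mp h1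

lemma aux_sum (k : ℝ) (hk0 : 0 ≤ k) (hk1 : k ≤ 1) :
    ∀ R : Multiset ℂ, (∀ w ∈ R, ‖w - 1‖ ≤ k * ‖w‖) →
      ‖R.sum - (R.card : ℂ)‖ ≤ k * ‖R.sum‖ := by
  intro R
  induction R using Multiset.induction with
  | empty => simp
  | cons b R ih =>
    intro h
    have hb := h b (Multiset.mem_cons_self _ _)
    have hs := ih (fun w hw => h w (Multiset.mem_cons_of_mem hw))
    rcases eq_or_ne R 0 with rfl | hR
    · simpa using hb
    · have hm : 1 ≤ (R.card : ℝ) := by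
        have : R.card ≠ 0 := by simpa [Multiset.card_eq_zero] using hR
        exact_mod_cast Nat.one_le_iff_ne_zero.mpr this
      have := aux_key k R.card hk0 hk1 hm R.sum b (by exact_mod_cast hs) hb
      rw [Multiset.sum_cons, Multiset.card_cons]
      push_cast
      convert this using 3 <;> push_cast <;> ring

lemma aux_deriv (z : ℂ) :
    ∀ R : Multiset ℂ, (∀ r ∈ R, z - r ≠ 0) →
      Polynomial.eval z (Polynomial.derivative (R.map fun r => Polynomial.X - Polynomial.C r).prod)
        = Polynomial.eval z (R.map fun r => Polynomial.X - Polynomial.C r).prod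
            * (R.map fun r => (z - r)⁻¹).sum := by
  intro R
  induction R using Multiset.induction with
  | empty => simp
  | cons a R ih =>
    intro h
    have hza := h a (Multiset.mem_cons_self _ _)
    have ih' := ih (fun r hr => h r (Multiset.mem_cons_of_mem hr))
    simp only [Multiset.map_cons, Multiset.prod_cons, Multiset.sum_cons, Polynomial.derivative_mul,
      Polynomial.eval_add, Polynomial.eval_mul, Polynomial.derivative_sub, Polynomial.derivative_X,
      Polynomial.derivative_C, Polynomial.eval_sub, Polynomial.eval_X, Polynomial.eval_C, sub_zero,
      Polynomial.eval_one, one_mul, ih']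
    field_simp

theorem stmt_15 (P : Polynomial ℂ) (n : ℕ) (k : ℝ) (α : ℂ)
    (hdeg : P.degree = n) (hk : k ≤ 1)
    (hzeros : ∀ z : ℂ, P.eval z = 0 → ‖z‖ ≤ k)
    (hα : k ≤ ‖α‖) :
    ∀ z : ℂ, ‖z‖ = 1 →
      (‖α‖ - k) * ‖(Polynomial.derivative P).eval z‖ ≤
        ‖(n : ℂ) * P.eval z + (α - z) * (Polynomial.derivative P).eval z‖ := by
  intro z hz
  by_cases hPz : P.eval z = 0
  · -- easy case: P(z) = 0
    rw [hPz, mul_zero, zero_add, norm_mul]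
    have h1 : ‖α‖ - k ≤ ‖α - z‖ := by
      have : ‖α‖ - ‖z‖ ≤ ‖α - z‖ := by
        simpa using norm_sub_norm_le α z
      have h2 := hzeros z hPz
      rw [hz] at h2
      linarith
    exact mul_le_mul_of_nonneg_right h1 (norm_nonneg _)
  rcases Nat.eq_zero_or_pos n with rfl | hn
  · -- degree 0
    have hnd : P.natDegree = 0 := Polynomial.natDegree_eq_of_degree_eq_some hdeg
    obtain ⟨c, rfl⟩ := Polynomial.natDegree_eq_zero.mp hnd
    simp [norm_nonneg]
  · -- main case
    have hnd : P.natDegree = n := Polynomial.natDegree_eq_of_degree_eq_some hdeg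
    have hsplit : Polynomial.Splits P := IsAlgClosed.splits P
    have hcard : Multiset.card P.roots = n := by
      rw [Polynomial.splits_iff_card_roots.mp hsplit, hnd]
    have hfac := hsplit.eq_prod_roots
    have hk0 : 0 ≤ k := by
      obtain ⟨r, hr⟩ := Multiset.card_pos_iff_exists_mem.mp (by rw [hcard]; exact hn)
      exact le_trans (norm_nonneg r) (hzeros r (Polynomial.isRoot_of_mem_roots hr))
    have hne : ∀ r ∈ P.roots, z - r ≠ 0 := by
      intro r hr h0
      apply hPz
      rw [sub_eq_zero] at h0
      rw [h0]
      exact Polynomial.isRoot_of_mem_roots hr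
    -- the derivative identity
    have hPe : P.eval z = P.leadingCoeff
        * Polynomial.eval z ((P.roots.map fun r => Polynomial.X - Polynomial.C r).prod) := by
      conv_lhs => rw [hfac]
      rw [Polynomial.eval_mul, Polynomial.eval_C]
    have hQ : Polynomial.eval z (Polynomial.derivative P)
        = P.eval z * (P.roots.map fun r => (z - r)⁻¹).sum := by
      conv_lhs => rw [hfac]
      rw [Polynomial.derivative_mul, Polynomial.derivative_C, zero_mul, zero_add,
        Polynomial.eval_mul, Polynomial.eval_C, aux_deriv z P.roots hne, hPe]
      ring
    set s : ℂ := (P.roots.map fun r => z * (z - r)⁻¹).sum with hsdef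
    have hzs : z * Polynomial.eval z (Polynomial.derivative P) = P.eval z * s := by
      rw [hQ, hsdef, Multiset.sum_map_mul_left]
      ring
    -- bound |s - n| ≤ k |s|
    have hB : ‖s - (n:ℂ)‖ ≤ k * ‖s‖ := by
      have hmap : s = (P.roots.map fun r => z * (z - r)⁻¹).sum := hsdef
      have := aux_sum k hk0 hk (P.roots.map fun r => z * (z - r)⁻¹) ?_
      · simpa [hcard] using this
      · intro w hw
        obtain ⟨r, hr, rfl⟩ := Multiset.mem_map.mp hw
        have hzr := hne r hr
        have h1 : z * (z - r)⁻¹ - 1 = r * (z - r)⁻¹ := by field_simp; ring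
        rw [h1, norm_mul, norm_mul, hz, one_mul]
        exact mul_le_mul_of_nonneg_right (hzeros r (Polynomial.isRoot_of_mem_roots hr))
          (norm_nonneg _)
    -- |nP - zP'| ≤ k |P'|
    have habs : ‖(n:ℂ) * P.eval z - z * Polynomial.eval z (Polynomial.derivative P)‖
        ≤ k * ‖Polynomial.eval z (Polynomial.derivative P)‖ := by
      have h2 : (n:ℂ) * P.eval z - z * Polynomial.eval z (Polynomial.derivative P)
          = -(P.eval z * (s - (n:ℂ))) := by rw [hzs]; ring
      have h3 : ‖Polynomial.eval z (Polynomial.derivative P)‖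
          = ‖P.eval z‖ * ‖s‖ := by
        have := congrArg norm hzs
        rwa [norm_mul, norm_mul, hz, one_mul] at this
      rw [h2, norm_neg, norm_mul, h3]
      calc ‖P.eval z‖ * ‖s - (n:ℂ)‖
          ≤ ‖P.eval z‖ * (k * ‖s‖) :=
            mul_le_mul_of_nonneg_left hB (norm_nonneg _)
        _ = k * (‖P.eval z‖ * ‖s‖) := by ring
    -- conclude
    have hsplit2 : (n:ℂ) * P.eval z + (α - z) * Polynomial.eval z (Polynomial.derivative P)
        = α * Polynomial.eval z (Polynomial.derivative P)
          + ((n:ℂ) * P.eval z - z * Polynomial.eval z (Polynomial.derivative P)) := by ring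
    rw [hsplit2]
    have htri : ‖α * Polynomial.eval z (Polynomial.derivative P)‖
        - ‖(n:ℂ) * P.eval z - z * Polynomial.eval z (Polynomial.derivative P)‖
        ≤ ‖α * Polynomial.eval z (Polynomial.derivative P)
          + ((n:ℂ) * P.eval z - z * Polynomial.eval z (Polynomial.derivative P))‖ := by
      have := norm_add_le (α * Polynomial.eval z (Polynomial.derivative P)
          + ((n:ℂ) * P.eval z - z * Polynomial.eval z (Polynomial.derivative P)))
        (-((n:ℂ) * P.eval z - z * Polynomial.eval z (Polynomial.derivative P)))
      simp only [add_neg_cancel_right, norm_neg] at this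
      linarith
    rw [norm_mul] at htri
    nlinarith [htri, habs, norm_nonneg (Polynomial.eval z (Polynomial.derivative P))]
end

section
/- Let P(z) = a_n z^n + Σ_{ν=μ}^{n} a_{n−ν} z^{n−ν}, where 1 ≤ μ ≤ n, be a polynomial of degree n (so the coefficients of z^{n−1}, ..., z^{n−μ+1} all vanish) having all its zeros in |z| ≤ k, where k ≤ 1. Then for every complex number α with |α| ≥ k^μ and every z with |z| = 1, one has |D_α P(z)| ≥ (|α| − k^μ)·|P'(z)|. -/
open Polynomial Finset

private lemma re_inv_one_sub {v : ℂ} (hv : ‖v‖ ≤ 1) (h1 : v ≠ 1) :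
    (1/2 : ℝ) ≤ ((1 - v)⁻¹).re := by
  have hd : (1 - v) ≠ 0 := sub_ne_zero.2 (by simpa using h1.symm)
  have hns : Complex.normSq (1 - v) > 0 := Complex.normSq_pos.2 hd
  have hre : ((1 - v)⁻¹).re = (1 - v).re / Complex.normSq (1 - v) := Complex.inv_re _
  have hv2 : v.re ^ 2 + v.im ^ 2 ≤ 1 := by
    have h2 := Complex.sq_norm v
    have h1' : ‖v‖ ^ 2 ≤ 1 := by nlinarith [norm_nonneg v]
    rw [h2, Complex.normSq_apply] at h1'
    nlinarith [sq_nonneg v.re, sq_nonneg v.im]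
  rw [hre, le_div_iff₀ hns]
  simp only [Complex.normSq_apply, Complex.sub_re, Complex.sub_im, Complex.one_re, Complex.one_im]
  nlinarith

private lemma deriv_prod_eval (R : Multiset ℂ) (w : ℂ) (hw : ∀ r ∈ R, w ≠ r) :
    eval w (derivative (R.map (fun r => X - C r)).prod) =
    eval w ((R.map (fun r => X - C r)).prod) * (R.map (fun r => (w - r)⁻¹)).sum := by
  induction R using Multiset.induction with
  | empty => simp
  | cons a s ih =>
    have ha : w - a ≠ 0 := sub_ne_zero.2 (hw a (Multiset.mem_cons_self a s))
    have ih' := ih (fun r hr => hw r (Multiset.mem_cons_of_mem hr))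
    simp only [Multiset.map_cons, Multiset.prod_cons, derivative_mul, Multiset.sum_cons,
      derivative_sub, derivative_X, derivative_C, sub_zero, one_mul, eval_add, eval_mul, eval_sub,
      eval_X, eval_C]
    rw [ih']
    field_simp

private lemma lemK (P : Polynomial ℂ) (w : ℂ) (hw : P.eval w ≠ 0)
    (hr : ∀ r ∈ P.roots, ‖r‖ ≤ ‖w‖) :
    ∃ t : ℂ, w * (derivative P).eval w = P.eval w * t ∧
      ((P.roots.card : ℝ)/2 ≤ t.re) := by
  have hP : P ≠ 0 := fun h => hw (by simp [h])
  have hsplits : P.Splits := IsAlgClosed.splits P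
  have hprod := hsplits.eq_prod_roots
  have hwr : ∀ r ∈ P.roots, w ≠ r := by
    intro r hrr hwe
    exact hw (by rw [hwe]; exact (Polynomial.mem_roots hP).1 hrr)
  set R := P.roots with hR
  refine ⟨w * (R.map (fun r => (w - r)⁻¹)).sum, ?_, ?_⟩
  · have hevP : P.eval w = P.leadingCoeff * eval w ((R.map (fun r => X - C r)).prod) := by
      conv_lhs => rw [hprod]
      rw [eval_mul, eval_C]
    have hevP' : (derivative P).eval w
        = P.leadingCoeff * eval w (derivative ((R.map (fun r => X - C r)).prod)) := by
      conv_lhs => rw [hprod]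
      rw [derivative_C_mul, eval_mul, eval_C]
    rw [hevP, hevP', deriv_prod_eval R w hwr]
    ring
  · have hmap : (w * (R.map (fun r => (w - r)⁻¹)).sum) =
        ((R.map (fun r => w * (w - r)⁻¹)).sum) := by
      rw [Multiset.sum_map_mul_left]
    rw [hmap]
    have hre : ((R.map (fun r => w * (w - r)⁻¹)).sum).re
        = ((R.map (fun r => w * (w - r)⁻¹)).map Complex.re).sum :=
      map_multiset_sum Complex.reAddGroupHom _
    rw [hre, Multiset.map_map]
    have hbound : ∀ x ∈ R.map (Complex.re ∘ (fun r => w * (w - r)⁻¹)), (1/2 : ℝ) ≤ x := by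
      intro x hx
      obtain ⟨r, hrr, rfl⟩ := Multiset.mem_map.1 hx
      have hw0 : w ≠ 0 := by
        intro h0
        have habs := hr r hrr
        rw [h0] at habs
        simp only [norm_zero] at habs
        have hr0 : r = 0 :=
          norm_eq_zero.1 (le_antisymm habs (norm_nonneg r))
        exact hwr r hrr (by rw [h0, hr0])
      have key : w * (w - r)⁻¹ = (1 - r/w)⁻¹ := by
        rw [div_eq_mul_inv]
        field_simp
      simp only [Function.comp_apply, key]
      apply re_inv_one_sub
      · rw [norm_div, div_le_one (norm_pos_iff.2 hw0)]
        exact hr r hrr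
      · intro h
        apply hwr r hrr
        field_simp at h
        exact h.symm
    have hs := Multiset.card_nsmul_le_sum hbound
    rw [Multiset.card_map] at hs
    calc (R.card : ℝ)/2 = R.card • (1/2 : ℝ) := by
          rw [nsmul_eq_mul]; ring
      _ ≤ _ := hs

private lemma absNT (n : ℕ) (t : ℂ) (h : (n:ℝ)/2 ≤ t.re) :
    ‖(n:ℂ) - t‖ ≤ ‖t‖ := by
  rw [Complex.norm_def, Complex.norm_def]
  apply Real.sqrt_le_sqrt
  simp only [Complex.normSq_apply, Complex.sub_re, Complex.sub_im, Complex.natCast_re,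
    Complex.natCast_im]
  nlinarith [Nat.cast_nonneg (α := ℝ) n]

private lemma conv_sum (n : ℕ) (z ζ : ℂ) (hζ : ζ ≠ 0) (f : ℕ → ℂ) :
    ζ^n * ∑ m ∈ range (n+1), f m * (z/ζ)^m = ∑ m ∈ range (n+1), f m * z^m * ζ^(n-m) := by
  rw [Finset.mul_sum]
  apply Finset.sum_congr rfl
  intro m hm
  have hm' : m ≤ n := by simpa [Nat.lt_succ_iff] using hm
  have hpow : ζ^(n-m) * ζ^m = ζ^n := by rw [← pow_add, Nat.sub_add_cancel hm']
  field_simp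
  rw [← hpow]
  rw [div_pow, show ζ ^ (n - m) * ζ ^ m * f m * (z ^ m / ζ ^ m) = f m * z ^ m * ζ ^ (n - m) * (ζ ^ m / ζ ^ m) by ring, div_self (pow_ne_zero m hζ), mul_one]

private lemma wderiv_sum (P : Polynomial ℂ) (n : ℕ) (w : ℂ)
    (hn : P.natDegree = n) (hn1 : 1 ≤ n) :
    w * (derivative P).eval w = ∑ m ∈ range (n+1), ((m:ℂ) * P.coeff m) * w^m := by
  have hd : (derivative P).natDegree < n := by
    have := Polynomial.natDegree_derivative_lt (p := P) (by omega : P.natDegree ≠ 0)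
    omega
  rw [eval_eq_sum_range' hd, Finset.sum_range_succ', Finset.mul_sum]
  simp only [coeff_derivative]
  push_cast
  rw [add_comm]
  simp only [Nat.cast_zero, zero_mul]
  rw [zero_add]
  apply Finset.sum_congr rfl
  intro m hm
  rw [pow_succ]
  ring

private lemma lemL (P : Polynomial ℂ) (n μ : ℕ) (k : ℝ)
    (hdeg : P.degree = n) (hμ1 : 1 ≤ μ) (hμn : μ ≤ n)
    (hgap : ∀ ν : ℕ, 1 ≤ ν → ν < μ → P.coeff (n - ν) = 0)
    (hk : k ≤ 1)
    (hzeros : ∀ z : ℂ, P.eval z = 0 → ‖z‖ ≤ k)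
    (z : ℂ) (hz : ‖z‖ = 1) :
    ‖(n : ℂ) * P.eval z - z * (derivative P).eval z‖
      ≤ k^μ * ‖(derivative P).eval z‖ := by
  have hP : P ≠ 0 := fun h => by simp [h] at hdeg
  have hn : P.natDegree = n := natDegree_eq_of_degree_eq_some hdeg
  have hn1 : 1 ≤ n := le_trans hμ1 hμn
  have hz0 : z ≠ 0 := by
    intro h; rw [h] at hz; simp at hz
  have hcard : P.roots.card = n := by
    rw [← hn]
    exact (Polynomial.splits_iff_card_roots).1 (IsAlgClosed.splits P)
  have hk0 : 0 ≤ k := by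
    have hdpos : 0 < P.degree := by
      rw [hdeg]; exact_mod_cast (by omega : 0 < n)
    obtain ⟨r, hrr⟩ := Complex.exists_root hdpos
    exact le_trans (norm_nonneg r) (hzeros r hrr)
  by_cases hk1 : 1 ≤ k
  -- CASE k = 1
  · have hk1' : k = 1 := le_antisymm hk hk1
    subst hk1'
    rw [one_pow, one_mul]
    by_cases hPz : P.eval z = 0
    · rw [hPz, mul_zero, zero_sub, norm_neg, norm_mul, hz, one_mul]
    · obtain ⟨t, ht1, ht2⟩ := lemK P z hPz (fun r hrr => by
        rw [hz]
        exact hzeros r ((Polynomial.mem_roots hP).1 hrr))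
      rw [hcard] at ht2
      have key : (n:ℂ) * P.eval z - z * (derivative P).eval z = P.eval z * ((n:ℂ) - t) := by
        rw [ht1]; ring
      have h2 : ‖(derivative P).eval z‖ = ‖z * (derivative P).eval z‖ := by
        rw [norm_mul, hz, one_mul]
      rw [key, h2, ht1, norm_mul, norm_mul]
      exact mul_le_mul_of_nonneg_left (absNT n t ht2) (norm_nonneg _)
  push_neg at hk1
  by_cases hkz : k = 0
  -- CASE k = 0
  · subst hkz
    have hroots0 : ∀ r ∈ P.roots, r = 0 := by
      intro r hrr
      have := hzeros r ((Polynomial.mem_roots hP).1 hrr)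
      exact norm_eq_zero.1 (le_antisymm this (norm_nonneg r))
    have hrep : P.roots = Multiset.replicate n 0 :=
      Multiset.eq_replicate.2 ⟨hcard, hroots0⟩
    have hprod := (IsAlgClosed.splits P).eq_prod_roots
    rw [hrep] at hprod
    have hXn : (Multiset.map (fun a => X - C a) (Multiset.replicate n (0:ℂ))).prod = X^n := by
      rw [Multiset.map_replicate, Multiset.prod_replicate]
      simp
    rw [hXn] at hprod
    have hzero : (n:ℂ) * P.eval z - z * (derivative P).eval z = 0 := by
      rw [hprod]
      simp only [derivative_C_mul, derivative_X_pow, eval_mul, eval_C, eval_pow, eval_X,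
        eval_mul, eval_natCast]
      have hzz : z * (z ^ (n-1)) = z ^ n := by
        rw [← pow_succ']
        congr 1
        omega
      calc (n:ℂ) * (P.leadingCoeff * z^n) - z * (P.leadingCoeff * ((n:ℂ) * z^(n-1)))
          = (n:ℂ) * P.leadingCoeff * z^n - (n:ℂ) * P.leadingCoeff * (z * z^(n-1)) := by ring
        _ = 0 := by rw [hzz]; ring
    rw [hzero]
    simp only [norm_zero]
    positivity
  -- CASE 0 < k < 1
  have hkpos : 0 < k := lt_of_le_of_ne hk0 (Ne.symm hkz)
  set Bf : ℂ → ℂ := fun ζ => ∑ m ∈ range (n+1), (m:ℂ) * P.coeff m * z^m * ζ^(n-m) with hBf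
  set Ahat : ℂ → ℂ :=
    fun ζ => ∑ m ∈ range (n-μ+1), ((n:ℂ)-(m:ℂ)) * P.coeff m * z^m * ζ^(n-μ-m) with hAhat
  -- identity for Bf
  have KB : ∀ ζ : ℂ, ζ ≠ 0 → Bf ζ = ζ^n * ((z/ζ) * (derivative P).eval (z/ζ)) := by
    intro ζ hζ
    rw [wderiv_sum P n (z/ζ) hn hn1, conv_sum n z ζ hζ (fun m => (m:ℂ) * P.coeff m)]
  -- identity for Ahat
  have KA : ∀ ζ : ℂ, ζ ≠ 0 →
      ζ^μ * Ahat ζ = ζ^n * ((n:ℂ) * P.eval (z/ζ) - (z/ζ) * (derivative P).eval (z/ζ)) := by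
    intro ζ hζ
    have hev : P.eval (z/ζ) = ∑ m ∈ range (n+1), P.coeff m * (z/ζ)^m :=
      eval_eq_sum_range' (by omega) (z/ζ)
    have e0 : (n:ℂ) * P.eval (z/ζ) - (z/ζ) * (derivative P).eval (z/ζ)
        = ∑ m ∈ range (n+1), ((n:ℂ)-(m:ℂ)) * P.coeff m * (z/ζ)^m := by
      rw [hev, wderiv_sum P n (z/ζ) hn hn1, Finset.mul_sum, ← Finset.sum_sub_distrib]
      apply Finset.sum_congr rfl
      intro m hm
      ring
    have e1 : ζ^n * ((n:ℂ) * P.eval (z/ζ) - (z/ζ) * (derivative P).eval (z/ζ))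
        = ∑ m ∈ range (n+1), ((n:ℂ)-(m:ℂ)) * P.coeff m * z^m * ζ^(n-m) := by
      rw [e0, conv_sum n z ζ hζ (fun m => ((n:ℂ)-(m:ℂ)) * P.coeff m)]
    rw [e1]
    have e2 : ∑ m ∈ range (n+1), (((n:ℂ)-(m:ℂ)) * P.coeff m) * z^m * ζ^(n-m)
        = ∑ m ∈ range (n-μ+1), (((n:ℂ)-(m:ℂ)) * P.coeff m) * z^m * ζ^(n-m) := by
      symm
      apply Finset.sum_subset
      · intro x hx
        simp only [Finset.mem_range] at *
        omega
      · intro x hx1 hx2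
        simp only [Finset.mem_range] at hx1 hx2
        have hx3 : n - μ < x := by omega
        have hx4 : x ≤ n := by omega
        by_cases hxn : x = n
        · subst hxn
          simp
        · have hco : P.coeff x = 0 := by
            have := hgap (n - x) (by omega) (by omega)
            have hnx : n - (n - x) = x := by omega
            rwa [hnx] at this
          rw [hco]
          ring
    rw [e2, hAhat]
    simp only []
    rw [Finset.mul_sum]
    apply Finset.sum_congr rfl
    intro m hm
    simp only [Finset.mem_range] at hm
    have : ζ^μ * ζ^(n-μ-m) = ζ^(n-m) := by
      rw [← pow_add]
      congr 1
      omega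
    calc ζ^μ * (((n:ℂ)-(m:ℂ)) * P.coeff m * z^m * ζ^(n-μ-m))
        = ((n:ℂ)-(m:ℂ)) * P.coeff m * z^m * (ζ^μ * ζ^(n-μ-m)) := by ring
      _ = _ := by rw [this]
  -- key domination on |ζ|k < 1
  have key : ∀ ζ : ℂ, ‖ζ‖ * k < 1 →
      ‖ζ^μ * Ahat ζ‖ ≤ ‖Bf ζ‖ ∧ Bf ζ ≠ 0 := by
    intro ζ hζk
    by_cases hζ : ζ = 0
    · subst hζ
      constructor
      · rw [zero_pow (by omega : μ ≠ 0), zero_mul, norm_zero]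
        exact norm_nonneg _
      · have : Bf 0 = (n:ℂ) * P.coeff n * z^n := by
          rw [hBf]
          simp only []
          rw [Finset.sum_eq_single n]
          · simp
          · intro b hb hbn
            simp only [Finset.mem_range] at hb
            rw [zero_pow (by omega : n - b ≠ 0)]
            ring
          · intro hnn
            exact absurd (Finset.self_mem_range_succ n) hnn
        rw [this]
        have hcn : P.coeff n ≠ 0 := by
          rw [← hn]
          exact Polynomial.leadingCoeff_ne_zero.2 hP
        have hn0 : (n:ℂ) ≠ 0 := Nat.cast_ne_zero.2 (by omega)
        exact mul_ne_zero (mul_ne_zero hn0 hcn) (pow_ne_zero n hz0)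
    · set w := z/ζ with hw
      have hζa : 0 < ‖ζ‖ := norm_pos_iff.2 hζ
      have hwabs : ‖w‖ = (‖ζ‖)⁻¹ := by
        rw [hw, norm_div, hz, one_div]
      have hkw : k < ‖w‖ := by
        rw [hwabs]
        have h1 : k * ‖ζ‖ < 1 := by rw [mul_comm]; exact hζk
        calc k = k * ‖ζ‖ * (‖ζ‖)⁻¹ := by field_simp
          _ < 1 * (‖ζ‖)⁻¹ := by
              apply mul_lt_mul_of_pos_right h1
              positivity
          _ = (‖ζ‖)⁻¹ := one_mul _
      have hPw : P.eval w ≠ 0 := fun h => absurd (hzeros w h) (not_le.2 hkw)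
      obtain ⟨t, ht1, ht2⟩ := lemK P w hPw (fun r hrr =>
        le_trans (hzeros r ((Polynomial.mem_roots hP).1 hrr)) (le_of_lt hkw))
      rw [hcard] at ht2
      have ht0 : t ≠ 0 := by
        intro h
        rw [h] at ht2
        simp only [Complex.zero_re] at ht2
        have : (1:ℝ) ≤ n := by exact_mod_cast hn1
        linarith
      have hA : ζ^μ * Ahat ζ = ζ^n * (P.eval w * ((n:ℂ) - t)) := by
        rw [KA ζ hζ, ← hw]
        congr 1
        rw [ht1]
        ring
      have hB : Bf ζ = ζ^n * (P.eval w * t) := by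
        rw [KB ζ hζ, ← hw, ht1]
      constructor
      · rw [hA, hB, norm_mul, norm_mul, norm_mul, norm_mul]
        apply mul_le_mul_of_nonneg_left _ (norm_nonneg _)
        exact mul_le_mul_of_nonneg_left (absNT n t ht2) (norm_nonneg _)
      · rw [hB]
        exact mul_ne_zero (pow_ne_zero n hζ) (mul_ne_zero hPw ht0)
  -- differentiability
  have hAdiff : Differentiable ℂ Ahat := by
    rw [hAhat]
    apply Differentiable.fun_sum
    intro m hm
    exact (differentiable_const _).mul (differentiable_pow _)
  have hBdiff : Differentiable ℂ Bf := by
    rw [hBf]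
    apply Differentiable.fun_sum
    intro m hm
    exact (differentiable_const _).mul (differentiable_pow _)
  set U : Set ℂ := {ζ : ℂ | ‖ζ‖ * k < 1} with hUdef
  have hUopen : IsOpen U := by
    have : U = (fun ζ : ℂ => ‖ζ‖ * k) ⁻¹' (Set.Iio 1) := rfl
    rw [this]
    exact (continuous_norm.mul continuous_const).isOpen_preimage _ isOpen_Iio
  have hdiff : DifferentiableOn ℂ (fun ζ => Ahat ζ / Bf ζ) U :=
    DifferentiableOn.div hAdiff.differentiableOn hBdiff.differentiableOn
      (fun ζ hζ => (key ζ hζ).2)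
  have h1U : (1:ℂ) ∈ U := by
    simp only [hUdef, Set.mem_setOf_eq, norm_one, one_mul]
    exact hk1
  have hB1ne : Bf 1 ≠ 0 := (key 1 h1U).2
  have hρbound : ∀ ρ : ℝ, 1 < ρ → ρ * k < 1 →
      ‖Ahat 1‖ ≤ ρ⁻¹^μ * ‖Bf 1‖ := by
    intro ρ hρ1 hρk
    have hρ0 : 0 < ρ := by linarith
    have hsub : Metric.closedBall (0:ℂ) ρ ⊆ U := by
      intro ζ hζ
      simp only [Metric.mem_closedBall, dist_zero_right] at hζ
      have hζρ : ‖ζ‖ ≤ ρ := hζ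
      simp only [hUdef, Set.mem_setOf_eq]
      calc ‖ζ‖ * k ≤ ρ * k := mul_le_mul_of_nonneg_right hζρ hk0
        _ < 1 := hρk
    have hcl : closure (Metric.ball (0:ℂ) ρ) = Metric.closedBall 0 ρ :=
      closure_ball 0 (ne_of_gt hρ0)
    have hdc : DiffContOnCl ℂ (fun ζ => Ahat ζ / Bf ζ) (Metric.ball (0:ℂ) ρ) := by
      refine ⟨hdiff.mono (Metric.ball_subset_closedBall.trans hsub), ?_⟩
      rw [hcl]
      exact (hdiff.continuousOn).mono hsub
    have hfr : ∀ ζ ∈ frontier (Metric.ball (0:ℂ) ρ), ‖Ahat ζ / Bf ζ‖ ≤ ρ⁻¹^μ := by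
      intro ζ hζ
      rw [frontier_ball 0 (ne_of_gt hρ0)] at hζ
      have hζρ : ‖ζ‖ = ρ := by
        simpa [Complex.dist_eq] using hζ
      have hζU : ζ ∈ U := by
        simp only [hUdef, Set.mem_setOf_eq, hζρ]
        exact hρk
      obtain ⟨hle, hne⟩ := key ζ hζU
      rw [norm_mul, norm_pow, hζρ] at hle
      have hBpos : 0 < ‖Bf ζ‖ := norm_pos_iff.2 hne
      rw [norm_div, div_le_iff₀ hBpos]
      calc ‖Ahat ζ‖ = ρ⁻¹^μ * (ρ^μ * ‖Ahat ζ‖) := by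
            rw [← mul_assoc, ← mul_pow, inv_mul_cancel₀ (ne_of_gt hρ0), one_pow, one_mul]
        _ ≤ ρ⁻¹^μ * ‖Bf ζ‖ := by
            apply mul_le_mul_of_nonneg_left hle
            positivity
    have h1cl : (1:ℂ) ∈ closure (Metric.ball (0:ℂ) ρ) := by
      rw [hcl]
      simp only [Metric.mem_closedBall, dist_zero_right, norm_one]
      linarith
    have hmax := Complex.norm_le_of_forall_mem_frontier_norm_le
      Metric.isBounded_ball hdc hfr h1cl
    rw [norm_div,
      div_le_iff₀ (norm_pos_iff.2 hB1ne)] at hmax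
    exact hmax
  have hinv1 : 1 < k⁻¹ := by
    have h1 : k * k⁻¹ = 1 := mul_inv_cancel₀ (ne_of_gt hkpos)
    nlinarith [inv_pos.2 hkpos]
  have hlim : Filter.Tendsto (fun ρ : ℝ => ρ⁻¹^μ * ‖Bf 1‖) (nhdsWithin k⁻¹ (Set.Iio k⁻¹))
      (nhds (k^μ * ‖Bf 1‖)) := by
    have hc : ContinuousAt (fun ρ : ℝ => ρ⁻¹^μ * ‖Bf 1‖) k⁻¹ :=
      ((continuousAt_inv₀ (by positivity)).pow μ).mul continuousAt_const
    have ht := hc.tendsto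
    rw [inv_inv] at ht
    exact ht.mono_left nhdsWithin_le_nhds
  have hev : ∀ᶠ ρ in nhdsWithin (k⁻¹:ℝ) (Set.Iio k⁻¹),
      ‖Ahat 1‖ ≤ ρ⁻¹^μ * ‖Bf 1‖ := by
    filter_upwards [Ioo_mem_nhdsLT_of_mem
      (show (k⁻¹:ℝ) ∈ Set.Ioc 1 k⁻¹ from ⟨hinv1, le_refl _⟩)] with ρ hρ
    apply hρbound ρ hρ.1
    calc ρ * k < k⁻¹ * k := mul_lt_mul_of_pos_right hρ.2 hkpos
      _ = 1 := inv_mul_cancel₀ (ne_of_gt hkpos)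
  have hfinal : ‖Ahat 1‖ ≤ k^μ * ‖Bf 1‖ := ge_of_tendsto hlim hev
  have hA1 : Ahat 1 = (n:ℂ) * P.eval z - z * (derivative P).eval z := by
    have hh := KA 1 one_ne_zero
    rw [one_pow, one_mul, one_pow, div_one, one_mul] at hh
    exact hh
  have hB1 : Bf 1 = z * (derivative P).eval z := by
    have hh := KB 1 one_ne_zero
    rw [one_pow, one_mul, div_one] at hh
    exact hh
  rw [hA1, hB1, norm_mul, hz, one_mul] at hfinal
  exact hfinal

theorem stmt_16 (P : Polynomial ℂ) (n μ : ℕ) (k : ℝ) (α : ℂ)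
    (hdeg : P.degree = n) (hμ1 : 1 ≤ μ) (hμn : μ ≤ n)
    (hgap : ∀ ν : ℕ, 1 ≤ ν → ν < μ → P.coeff (n - ν) = 0)
    (hk : k ≤ 1)
    (hzeros : ∀ z : ℂ, P.eval z = 0 → ‖z‖ ≤ k)
    (hα : k ^ μ ≤ ‖α‖) :
    ∀ z : ℂ, ‖z‖ = 1 →
      (‖α‖ - k ^ μ) * ‖(Polynomial.derivative P).eval z‖ ≤
        ‖(n : ℂ) * P.eval z + (α - z) * (Polynomial.derivative P).eval z‖ := by
  intro z hz
  have hL := lemL P n μ k hdeg hμ1 hμn hgap hk hzeros z hz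
  have hid : (n:ℂ) * P.eval z + (α - z) * (derivative P).eval z
      = α * (derivative P).eval z + ((n:ℂ) * P.eval z - z * (derivative P).eval z) := by
    ring
  rw [hid]
  have htri : ‖α * (derivative P).eval z‖
      ≤ ‖α * (derivative P).eval z +
          ((n:ℂ) * P.eval z - z * (derivative P).eval z)‖
        + ‖(n:ℂ) * P.eval z - z * (derivative P).eval z‖ := by
    have hconv : α * (derivative P).eval z
        = (α * (derivative P).eval z + ((n:ℂ) * P.eval z - z * (derivative P).eval z))
          + (-((n:ℂ) * P.eval z - z * (derivative P).eval z)) := by ring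
    calc ‖α * (derivative P).eval z‖
        = ‖(α * (derivative P).eval z +
            ((n:ℂ) * P.eval z - z * (derivative P).eval z))
          + (-((n:ℂ) * P.eval z - z * (derivative P).eval z))‖ := by rw [← hconv]
      _ ≤ _ + ‖-((n:ℂ) * P.eval z - z * (derivative P).eval z)‖ :=
          norm_add_le _ _
      _ = _ := by rw [norm_neg]
  have hαD : ‖α * (derivative P).eval z‖
      = ‖α‖ * ‖(derivative P).eval z‖ := norm_mul _ _
  rw [sub_mul]
  linarith
end
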